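/- Let G be a bipartite multigraph with maximum degree Δ, let k ≥ 1, and take the palette K = {1, …, Δ+k}. If G is properly precoloured on a set S of edges so that every vertex is incident with at most k precoloured edges, then the precolouring extends to a proper edge-colouring of all of G using colours from K. -/

import Mathlib

variable {V E : Type*}

/-- Edges `e` and `f` of a multigraph (given by its endpoint map `ends`) are adjacent:
they are distinct and share an endpoint. -/
def MAdj (ends : E → Sym2 V) (e f : E) : Prop :=
  e ≠ f ∧ ∃ v : V, v ∈ ends e ∧ v ∈ ends f

/-- `c` is a proper edge-colouring of the multigraph: adjacent edges get distinct colours. -/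
def MProper (ends : E → Sym2 V) (c : E → ℕ) : Prop :=
  ∀ e f : E, MAdj ends e f → c e ≠ c f

/-- The degree of a vertex `v`: the number of edges incident with it. -/
noncomputable def mdeg (ends : E → Sym2 V) (v : V) : ℕ :=
  {e : E | v ∈ ends e}.ncard


open Finset

attribute [local instance] Classical.propDecidable

section Infra

variable (ends : E → Sym2 V) (side : V → Bool)

/-- hypotheses bundle -/
structure Bip : Prop where
  hloop : ∀ e, ¬ (ends e).IsDiag
  hbip : ∀ (e : E) (u v : V), ends e = s(u, v) → side u ≠ side v

variable {ends side}

theorem Bip.exists_ends (hb : Bip ends side) (e : E) :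
    ∃ a b : V, ends e = s(a, b) ∧ side a = true ∧ side b = false := by
  obtain ⟨⟨a, b⟩, h⟩ := Quot.exists_rep (ends e)
  have hab : ends e = s(a, b) := h.symm
  have hne := hb.hbip e a b hab
  cases ha : side a
  · refine ⟨b, a, ?_, ?_, ha⟩
    · rw [hab, Sym2.eq_swap]
    · revert hne; cases hs : side b <;> simp [ha, hs]
  · exact ⟨a, b, hab, ha, by revert hne; cases hs : side b <;> simp [ha, hs]⟩

noncomputable def eA (hb : Bip ends side) (e : E) : V := (hb.exists_ends e).choose

noncomputable def eB (hb : Bip ends side) (e : E) : V :=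
  (hb.exists_ends e).choose_spec.choose

theorem ends_eq (hb : Bip ends side) (e : E) :
    ends e = s(eA hb e, eB hb e) := (hb.exists_ends e).choose_spec.choose_spec.1

theorem sideA (hb : Bip ends side) (e : E) : side (eA hb e) = true :=
  (hb.exists_ends e).choose_spec.choose_spec.2.1

theorem sideB (hb : Bip ends side) (e : E) : side (eB hb e) = false :=
  (hb.exists_ends e).choose_spec.choose_spec.2.2

theorem mem_ends_iff (hb : Bip ends side) {w : V} {e : E} :
    w ∈ ends e ↔ w = eA hb e ∨ w = eB hb e := by
  rw [ends_eq hb e]; exact Sym2.mem_iff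

theorem eA_mem (hb : Bip ends side) (e : E) : eA hb e ∈ ends e := by
  rw [mem_ends_iff hb]; left; rfl

theorem eB_mem (hb : Bip ends side) (e : E) : eB hb e ∈ ends e := by
  rw [mem_ends_iff hb]; right; rfl

theorem eA_ne_eB (hb : Bip ends side) (e f : E) : eA hb e ≠ eB hb f := by
  intro h
  have := sideA hb e
  rw [h, sideB hb f] at this
  exact Bool.false_ne_true this

/-- adjacency via shared A-end or shared B-end -/
theorem madj_iff (hb : Bip ends side) {e f : E} :
    MAdj ends e f ↔ e ≠ f ∧ (eA hb e = eA hb f ∨ eB hb e = eB hb f) := by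
  constructor
  · rintro ⟨hne, v, hv1, hv2⟩
    refine ⟨hne, ?_⟩
    rw [mem_ends_iff hb] at hv1 hv2
    rcases hv1 with h1 | h1 <;> rcases hv2 with h2 | h2
    · left; rw [← h1, ← h2]
    · exact absurd (h1.symm.trans h2) (eA_ne_eB hb e f)
    · exact absurd (h2.symm.trans h1) (eA_ne_eB hb f e)
    · right; rw [← h1, ← h2]
  · rintro ⟨hne, h | h⟩
    · exact ⟨hne, eA hb e, eA_mem hb e, by rw [h]; exact eA_mem hb f⟩
    · exact ⟨hne, eB hb e, eB_mem hb e, by rw [h]; exact eB_mem hb f⟩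

end Infra

set_option linter.unusedSectionVars false
section Orders

variable [Fintype E] {ends : E → Sym2 V} {side : V → Bool} (hb : Bip ends side)

/-- edges of F incident with w -/
noncomputable def estar (F : Finset E) (w : V) : Finset E :=
  F.filter (fun f => w ∈ ends f)

noncomputable def dg (F : Finset E) (w : V) : ℕ := (estar (ends := ends) F w).card

/-- injective on stars -/
def StarInj (F : Finset E) (σ : V → E → ℤ) : Prop :=
  ∀ w : V, ∀ e ∈ F, ∀ f ∈ F, w ∈ ends e → w ∈ ends f → σ w e = σ w f → e = f

/-- e is dominated by f -/
def Dom (σ : V → E → ℤ) (e f : E) : Prop :=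
  (eA hb f = eA hb e ∧ σ (eA hb e) e < σ (eA hb e) f) ∨
  (eB hb f = eB hb e ∧ σ (eB hb e) f < σ (eB hb e) e)

noncomputable def outdeg (F : Finset E) (σ : V → E → ℤ) (e : E) : ℕ :=
  (F.filter (fun f => Dom hb σ e f)).card

noncomputable def cntA (F : Finset E) (σ : V → E → ℤ) (e : E) : ℕ :=
  (F.filter (fun f => eA hb f = eA hb e ∧ σ (eA hb e) e < σ (eA hb e) f)).card

noncomputable def cntB (F : Finset E) (σ : V → E → ℤ) (e : E) : ℕ :=
  (F.filter (fun f => eB hb f = eB hb e ∧ σ (eB hb e) f < σ (eB hb e) e)).card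

theorem outdeg_le (F : Finset E) (σ : V → E → ℤ) (e : E) :
    outdeg hb F σ e ≤ cntA hb F σ e + cntB hb F σ e := by
  classical
  have : F.filter (fun f => Dom hb σ e f) ⊆
      F.filter (fun f => eA hb f = eA hb e ∧ σ (eA hb e) e < σ (eA hb e) f) ∪
      F.filter (fun f => eB hb f = eB hb e ∧ σ (eB hb e) f < σ (eB hb e) e) := by
    intro f hf
    rw [Finset.mem_filter] at hf
    rcases hf.2 with h | h
    · exact Finset.mem_union_left _ (Finset.mem_filter.2 ⟨hf.1, h⟩)
    · exact Finset.mem_union_right _ (Finset.mem_filter.2 ⟨hf.1, h⟩)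
  exact le_trans (Finset.card_le_card this) (Finset.card_union_le _ _)

/-- pairwise vertex-disjoint -/
def MMatch (M : Finset E) : Prop :=
  ∀ m ∈ M, ∀ m' ∈ M, m ≠ m' → eA hb m ≠ eA hb m' ∧ eB hb m ≠ eB hb m'

theorem mmatch_not_adj {M : Finset E} (hM : MMatch hb M) {m m' : E}
    (h1 : m ∈ M) (h2 : m' ∈ M) (hadj : MAdj ends m m') : False := by
  rw [madj_iff hb] at hadj
  rcases hadj with ⟨hne, h | h⟩
  · exact (hM m h1 m' h2 hne).1 h
  · exact (hM m h1 m' h2 hne).2 h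

/-- Kernel lemma -/
theorem kernel (σ : V → E → ℤ) :
    ∀ G : Finset E, StarInj (ends := ends) G σ →
    ∃ M ⊆ G, MMatch hb M ∧ ∀ e ∈ G, e ∉ M → ∃ m ∈ M, Dom hb σ e m := by
  classical
  intro G
  induction G using Finset.strongInduction with
  | _ G IH =>
    intro hinj
    -- proposals: edges that are σ-max at their A-end
    set P : Finset E := G.filter
      (fun e => ∀ f ∈ G, eA hb f = eA hb e → σ (eA hb e) f ≤ σ (eA hb e) e) with hP
    by_cases hcase : ∃ e0 ∈ P,
        (G.filter (fun f => eB hb f = eB hb e0 ∧ σ (eB hb e0) e0 < σ (eB hb e0) f)).Nonempty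
    · obtain ⟨e0, he0P, hDel⟩ := hcase
      set Del := G.filter (fun f => eB hb f = eB hb e0 ∧ σ (eB hb e0) e0 < σ (eB hb e0) f)
        with hDelDef
      have he0G : e0 ∈ G := (Finset.mem_filter.1 he0P).1
      have he0max : ∀ f ∈ G, eA hb f = eA hb e0 → σ (eA hb e0) f ≤ σ (eA hb e0) e0 :=
        (Finset.mem_filter.1 he0P).2
      have hsub : G \ Del ⊂ G := by
        refine Finset.sdiff_ssubset ?_ ?_
        · exact Finset.filter_subset _ _
        · exact hDel
      obtain ⟨M, hMsub, hMmatch, hMdom⟩ := IH (G \ Del) hsub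
        (fun w e he f hf => hinj w e (Finset.mem_sdiff.1 he).1 f (Finset.mem_sdiff.1 hf).1)
      refine ⟨M, le_trans hMsub (Finset.sdiff_subset), hMmatch, ?_⟩
      intro e heG heM
      by_cases heDel : e ∈ Del
      · -- e ∈ Del : dominated via e0 or via e0's dominator
        obtain ⟨hB, hlt⟩ := (Finset.mem_filter.1 heDel).2
        have he0notDel : e0 ∉ Del := by
          rw [hDelDef, Finset.mem_filter]
          rintro ⟨-, -, h⟩; exact lt_irrefl _ h
        by_cases he0M : e0 ∈ M
        · exact ⟨e0, he0M, Or.inr ⟨by rw [hB], by rw [hB]; exact hlt⟩⟩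
        · obtain ⟨m, hmM, hmdom⟩ := hMdom e0 (Finset.mem_sdiff.2 ⟨he0G, he0notDel⟩) he0M
          have hmG : m ∈ G := (Finset.mem_sdiff.1 (hMsub hmM)).1
          rcases hmdom with ⟨hA, hlt2⟩ | ⟨hB2, hlt2⟩
          · -- impossible: e0 is max at its A-end
            exact absurd (he0max m hmG hA) (not_le.2 hlt2)
          · refine ⟨m, hmM, Or.inr ⟨by rw [hB2, hB], ?_⟩⟩
            rw [hB]
            exact lt_trans hlt2 hlt
      · obtain ⟨m, hmM, hmdom⟩ := hMdom e (Finset.mem_sdiff.2 ⟨heG, heDel⟩) heM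
        exact ⟨m, hmM, hmdom⟩
    · -- no proposal has anything above it at its B-end: M := P works
      push_neg at hcase
      refine ⟨P, Finset.filter_subset _ _, ?_, ?_⟩
      · intro m hm m' hm' hne
        have hmG : m ∈ G := (Finset.mem_filter.1 hm).1
        have hm'G : m' ∈ G := (Finset.mem_filter.1 hm').1
        constructor
        · intro hA
          have h1 := (Finset.mem_filter.1 hm).2 m' hm'G hA.symm
          have h2 := (Finset.mem_filter.1 hm').2 m hmG hA
          rw [← hA] at h2
          have : σ (eA hb m) m = σ (eA hb m) m' := le_antisymm h2 h1
          exact hne (hinj _ m hmG m' hm'G (eA_mem hb m) (by rw [hA]; exact eA_mem hb m') this)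
        · intro hBeq
          have h1 := hcase m hm
          have h2 := hcase m' hm'
          rw [Finset.filter_eq_empty_iff] at h1 h2
          have hc1 := h1 hm'G
          have hc2 := h2 hmG
          push_neg at hc1 hc2
          have e1 : eB hb m' = eB hb m := hBeq.symm
          have l1 := hc1 e1
          have l2 := hc2 hBeq
          rw [hBeq] at l1
          have : σ (eB hb m') m = σ (eB hb m') m' := le_antisymm l2 l1
          exact hne (hinj _ m hmG m' hm'G (by rw [← hBeq]; exact eB_mem hb m)
            (eB_mem hb m') this)
      · intro e heG heP
        -- the proposal at e's A-end dominates e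
        have hne : (G.filter (fun f => eA hb f = eA hb e)).Nonempty :=
          ⟨e, Finset.mem_filter.2 ⟨heG, rfl⟩⟩
        obtain ⟨p, hp, hpmax⟩ := Finset.exists_max_image _ (fun f => σ (eA hb e) f) hne
        obtain ⟨hpG, hpA⟩ := Finset.mem_filter.1 hp
        have hpP : p ∈ P := by
          rw [hP, Finset.mem_filter]
          refine ⟨hpG, ?_⟩
          intro f hf hAf
          rw [hpA]
          exact hpmax f (Finset.mem_filter.2 ⟨hf, by rw [hAf, hpA]⟩)
        have hpe : p ≠ e := fun h => heP (h ▸ hpP)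
        have hlt : σ (eA hb e) e < σ (eA hb e) p := by
          rcases lt_or_eq_of_le (hpmax e (Finset.mem_filter.2 ⟨heG, rfl⟩)) with h | h
          · exact h
          · exact absurd (hinj _ e heG p hpG (eA_mem hb e) (by rw [← hpA]; exact eA_mem hb p) h)
              (fun hh => hpe hh.symm)
        exact ⟨p, hpP, Or.inl ⟨hpA, hlt⟩⟩

end Orders

section ListCol

variable [Fintype E] {ends : E → Sym2 V} {side : V → Bool} (hb : Bip ends side)

theorem listcol (σ : V → E → ℤ) :
    ∀ N : ℕ, ∀ F : Finset E, ∀ L : E → Finset ℕ,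
    (∑ e ∈ F, (L e).card) ≤ N →
    StarInj (ends := ends) F σ →
    (∀ e ∈ F, outdeg hb F σ e < (L e).card) →
    ∃ c : E → ℕ, (∀ e ∈ F, c e ∈ L e) ∧
      (∀ e ∈ F, ∀ f ∈ F, MAdj ends e f → c e ≠ c f) := by
  classical
  intro N
  induction N with
  | zero =>
    intro F L hsum hinj hL
    rcases Finset.eq_empty_or_nonempty F with rfl | ⟨e1, he1⟩
    · exact ⟨fun _ => 0, by simp, by simp⟩
    · exfalso
      have h1 : 0 < (L e1).card := lt_of_le_of_lt (Nat.zero_le _) (hL e1 he1)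
      have : 0 < ∑ e ∈ F, (L e).card :=
        lt_of_lt_of_le h1 (Finset.single_le_sum (f := fun e => (L e).card) (fun e _ => Nat.zero_le _) he1)
      omega
  | succ N IH =>
    intro F L hsum hinj hL
    rcases Finset.eq_empty_or_nonempty F with rfl | ⟨e1, he1⟩
    · exact ⟨fun _ => 0, by simp, by simp⟩
    have hLe1 : (L e1).Nonempty := Finset.card_pos.1 (lt_of_le_of_lt (Nat.zero_le _) (hL e1 he1))
    obtain ⟨α, hα⟩ := hLe1
    set G : Finset E := F.filter (fun e => α ∈ L e) with hG
    have hGF : G ⊆ F := Finset.filter_subset _ _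
    obtain ⟨M, hMG, hMmatch, hMdom⟩ := kernel hb σ G
      (fun w e he f hf => hinj w e (hGF he) f (hGF hf))
    have he1G : e1 ∈ G := Finset.mem_filter.2 ⟨he1, hα⟩
    have hMne : M.Nonempty := by
      by_cases h : e1 ∈ M
      · exact ⟨e1, h⟩
      · obtain ⟨m, hm, -⟩ := hMdom e1 he1G h
        exact ⟨m, hm⟩
    set F' : Finset E := F \ M with hF'
    set L' : E → Finset ℕ := fun e => if e ∈ G then (L e).erase α else L e with hL'
    have hL'e : ∀ e, L' e = if e ∈ G then (L e).erase α else L e := fun _ => rfl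
    have hsub' : ∀ e, L' e ⊆ L e := by
      intro e x hx
      rw [hL'e, ] at hx
      by_cases h : e ∈ G
      · rw [if_pos h] at hx; exact Finset.erase_subset _ _ hx
      · rwa [if_neg h] at hx
    -- invariant
    have hinv : ∀ e ∈ F', outdeg hb F' σ e < (L' e).card := by
      intro e heF'
      obtain ⟨heF, heM⟩ := Finset.mem_sdiff.1 heF'
      by_cases heG : e ∈ G
      · obtain ⟨m, hmM, hmdom⟩ := hMdom e heG heM
        have hmF : m ∈ F := hGF (hMG hmM)
        have hdrop : outdeg hb F' σ e + 1 ≤ outdeg hb F σ e := by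
          have hsubf : F'.filter (fun f => Dom hb σ e f) ⊆
              (F.filter (fun f => Dom hb σ e f)).erase m := by
            intro f hf
            rw [Finset.mem_filter] at hf
            obtain ⟨hfF', hfdom⟩ := hf
            obtain ⟨hfF, hfM⟩ := Finset.mem_sdiff.1 hfF'
            refine Finset.mem_erase.2 ⟨?_, Finset.mem_filter.2 ⟨hfF, hfdom⟩⟩
            rintro rfl; exact hfM hmM
          have hmmem : m ∈ F.filter (fun f => Dom hb σ e f) :=
            Finset.mem_filter.2 ⟨hmF, hmdom⟩
          calc outdeg hb F' σ e + 1 ≤ ((F.filter (fun f => Dom hb σ e f)).erase m).card + 1 :=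
                by exact Nat.add_le_add_right (Finset.card_le_card hsubf) 1
            _ = outdeg hb F σ e := by
                have h0 : 0 < (F.filter (fun f => Dom hb σ e f)).card :=
                  Finset.card_pos.2 ⟨m, hmmem⟩
                show _ = (F.filter (fun f => Dom hb σ e f)).card
                rw [Finset.card_erase_of_mem hmmem]
                omega
        have hcard : (L' e).card = (L e).card - 1 := by
          rw [hL'e, if_pos heG]
          exact Finset.card_erase_of_mem ((Finset.mem_filter.1 heG).2)
        have := hL e heF
        have h0 : 0 < (L e).card := lt_of_le_of_lt (Nat.zero_le _) this
        omega
      · have : outdeg hb F' σ e ≤ outdeg hb F σ e :=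
          Finset.card_le_card (Finset.filter_subset_filter _ (Finset.sdiff_subset))
        have hcard : L' e = L e := by rw [hL'e]; exact if_neg heG
        rw [hcard]
        exact lt_of_le_of_lt this (hL e heF)
    -- sum decreases
    have hsum' : (∑ e ∈ F', (L' e).card) ≤ N := by
      obtain ⟨m0, hm0⟩ := hMne
      have hm0F : m0 ∈ F := hGF (hMG hm0)
      have h1 : (∑ e ∈ F', (L' e).card) ≤ ∑ e ∈ F', (L e).card :=
        Finset.sum_le_sum (fun e _ => Finset.card_le_card (hsub' e))
      have h2 : (∑ e ∈ F', (L e).card) + (L m0).card ≤ ∑ e ∈ F, (L e).card := by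
        have : F' ⊆ F.erase m0 := by
          intro f hf
          obtain ⟨hfF, hfM⟩ := Finset.mem_sdiff.1 hf
          exact Finset.mem_erase.2 ⟨fun h => hfM (h ▸ hm0), hfF⟩
        calc (∑ e ∈ F', (L e).card) + (L m0).card
            ≤ (∑ e ∈ F.erase m0, (L e).card) + (L m0).card :=
              Nat.add_le_add_right (Finset.sum_le_sum_of_subset this) _
          _ = ∑ e ∈ F, (L e).card := Finset.sum_erase_add _ _ hm0F
      have h3 : 0 < (L m0).card := lt_of_le_of_lt (Nat.zero_le _) (hL m0 hm0F)
      omega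
    obtain ⟨c', hc'mem, hc'prop⟩ := IH F' L' hsum'
      (fun w e he f hf => hinj w e (Finset.mem_sdiff.1 he).1 f (Finset.mem_sdiff.1 hf).1)
      hinv
    refine ⟨fun e => if e ∈ M then α else c' e, ?_, ?_⟩
    · intro e heF
      show (if e ∈ M then α else c' e) ∈ L e
      by_cases h : e ∈ M
      · rw [if_pos h]
        exact (Finset.mem_filter.1 (hMG h)).2
      · rw [if_neg h]
        exact hsub' e (hc'mem e (Finset.mem_sdiff.2 ⟨heF, h⟩))
    · intro e heF f hfF hadj
      have hcne : ∀ g, g ∈ F → g ∉ M → c' g ≠ α := by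
        intro g hgF hgM hc
        have hgF' : g ∈ F' := Finset.mem_sdiff.2 ⟨hgF, hgM⟩
        have := hc'mem g hgF'
        rw [hL'e] at this
        by_cases hgG : g ∈ G
        · rw [if_pos hgG] at this
          rw [hc] at this
          exact (Finset.notMem_erase _ _) this
        · rw [if_neg hgG] at this
          rw [hG, Finset.mem_filter] at hgG
          exact hgG ⟨hgF, hc ▸ this⟩
      show (if e ∈ M then α else c' e) ≠ (if f ∈ M then α else c' f)
      by_cases he : e ∈ M <;> by_cases hf : f ∈ M
      · exact absurd hadj (fun h => mmatch_not_adj hb hMmatch he hf h)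
      · rw [if_pos he, if_neg hf]
        exact fun h => (hcne f hfF hf) h.symm
      · rw [if_neg he, if_pos hf]
        exact hcne e heF he
      · rw [if_neg he, if_neg hf]
        exact hc'prop e (Finset.mem_sdiff.2 ⟨heF, he⟩) f (Finset.mem_sdiff.2 ⟨hfF, hf⟩) hadj

end ListCol

section KC

variable [Fintype E] {ends : E → Sym2 V} {side : V → Bool} (hb : Bip ends side)

/-- König: a matching together with a choice of one cover-vertex per matching edge,
such that every edge of F contains one of the chosen vertices. -/
theorem kc (F : Finset E) :
    ∃ (M : Finset E) (χ : E → V), M ⊆ F ∧ MMatch hb M ∧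
      (∀ m ∈ M, χ m ∈ ends m) ∧ (∀ f ∈ F, ∃ m ∈ M, χ m ∈ ends f) := by
  classical
  rcases Finset.eq_empty_or_nonempty F with rfl | ⟨e0, he0⟩
  · exact ⟨∅, fun e => eA hb e, by simp, by simp [MMatch], by simp, by simp⟩
  set As : Finset V := F.image (eA hb) with hAs
  set NB : V → Finset V := fun u => (F.filter (fun f => eA hb f = u)).image (eB hb) with hNB
  -- defect
  obtain ⟨W0, hW0mem, hW0max⟩ := Finset.exists_max_image As.powerset
    (fun W => W.card - (W.biUnion NB).card) ⟨∅, Finset.empty_mem_powerset _⟩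
  set q : ℕ := W0.card - (W0.biUnion NB).card with hq
  have hdef : ∀ W ⊆ As, W.card ≤ (W.biUnion NB).card + q := by
    intro W hW
    have := hW0max W (Finset.mem_powerset.2 hW)
    omega
  -- a tight defect witness
  obtain ⟨Ws, hWs, hWscard⟩ :
      ∃ Ws ⊆ As, Ws.card = (Ws.biUnion NB).card + q := by
    by_cases h0 : q = 0
    · exact ⟨∅, Finset.empty_subset _, by simp [h0]⟩
    · refine ⟨W0, Finset.mem_powerset.1 hW0mem, ?_⟩
      omega
  -- Hall's theorem
  set ι := {x // x ∈ As}
  set t : ι → Finset (V ⊕ Fin q) := fun u =>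
    (NB u.1).map ⟨Sum.inl, Sum.inl_injective⟩ ∪ (Finset.univ.map ⟨Sum.inr, Sum.inr_injective⟩)
    with ht
  have hHall : ∀ s : Finset ι, s.card ≤ (s.biUnion t).card := by
    intro s
    rcases Finset.eq_empty_or_nonempty s with rfl | ⟨x0, hx0⟩
    · simp
    set W : Finset V := s.image (fun x => x.1) with hW
    have hWcard : W.card = s.card := Finset.card_image_of_injective _ Subtype.val_injective
    have hWAs : W ⊆ As := by
      intro w hw
      obtain ⟨x, -, rfl⟩ := Finset.mem_image.1 hw
      exact x.2
    have hsub : ((W.biUnion NB).map ⟨Sum.inl, Sum.inl_injective⟩ ∪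
        (Finset.univ.map ⟨Sum.inr, Sum.inr_injective⟩) : Finset (V ⊕ Fin q)) ⊆
        s.biUnion t := by
      intro z hz
      rcases Finset.mem_union.1 hz with hz | hz
      · obtain ⟨y, hy, rfl⟩ := Finset.mem_map.1 hz
        obtain ⟨w, hw, hyw⟩ := Finset.mem_biUnion.1 hy
        obtain ⟨x, hx, rfl⟩ := Finset.mem_image.1 hw
        exact Finset.mem_biUnion.2 ⟨x, hx, Finset.mem_union_left _
          (Finset.mem_map.2 ⟨y, hyw, rfl⟩)⟩
      · exact Finset.mem_biUnion.2 ⟨x0, hx0, Finset.mem_union_right _ hz⟩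
    have hdisj : Disjoint ((W.biUnion NB).map ⟨Sum.inl, Sum.inl_injective⟩)
        ((Finset.univ : Finset (Fin q)).map ⟨Sum.inr, Sum.inr_injective⟩) := by
      rw [Finset.disjoint_left]
      intro z hz1 hz2
      obtain ⟨y, -, rfl⟩ := Finset.mem_map.1 hz1
      obtain ⟨j, -, hj⟩ := Finset.mem_map.1 hz2
      exact Sum.inl_ne_inr hj.symm
    have hcard : (((W.biUnion NB).map ⟨Sum.inl, Sum.inl_injective⟩ ∪
        (Finset.univ.map ⟨Sum.inr, Sum.inr_injective⟩)) : Finset (V ⊕ Fin q)).card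
        = (W.biUnion NB).card + q := by
      rw [Finset.card_union_of_disjoint hdisj, Finset.card_map, Finset.card_map,
        Finset.card_univ, Fintype.card_fin]
    calc s.card = W.card := hWcard.symm
      _ ≤ (W.biUnion NB).card + q := hdef W hWAs
      _ = _ := hcard.symm
      _ ≤ (s.biUnion t).card := Finset.card_le_card hsub
  obtain ⟨f, hfinj, hfmem⟩ := (Finset.all_card_le_biUnion_card_iff_exists_injective t).1 hHall
  -- the matching
  set Px : ι → Prop := fun x => ∃ e ∈ F, eA hb e = x.1 ∧ Sum.inl (eB hb e) = f x with hPx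
  set eF : ι → E := fun x => if h : Px x then h.choose else e0 with heF
  have heFspec : ∀ x, Px x → eF x ∈ F ∧ eA hb (eF x) = x.1 ∧ Sum.inl (eB hb (eF x)) = f x := by
    intro x hx
    rw [heF]
    simp only [dif_pos hx]
    obtain ⟨h1, h2⟩ := hx.choose_spec
    exact ⟨h1, h2⟩
  have hPxholds : ∀ x : ι, (∃ y : V, f x = Sum.inl y) → Px x := by
    rintro x ⟨y, hy⟩
    have := hfmem x
    rw [ht] at this
    simp only at this
    rcases Finset.mem_union.1 this with h | h
    · obtain ⟨y', hy', hyy⟩ := Finset.mem_map.1 h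
      obtain ⟨e, he, heq⟩ := Finset.mem_image.1 (by
        rw [hNB] at hy'; exact hy')
      obtain ⟨heF', heA⟩ := Finset.mem_filter.1 he
      exact ⟨e, heF', heA, by rw [heq]; exact hyy⟩
    · obtain ⟨j, -, hj⟩ := Finset.mem_map.1 h
      rw [← hj] at hy
      exact absurd hy.symm (Sum.inl_ne_inr)
  set Mset : Finset ι := Finset.univ.filter (fun x => ∃ y : V, f x = Sum.inl y) with hMset
  set M : Finset E := Mset.image eF with hM
  have hMspec : ∀ m ∈ M, ∃ x ∈ Mset, eF x = m ∧ m ∈ F ∧ eA hb m = x.1 ∧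
      Sum.inl (eB hb m) = f x := by
    intro m hm
    obtain ⟨x, hx, rfl⟩ := Finset.mem_image.1 hm
    have hPxx := hPxholds x (Finset.mem_filter.1 hx).2
    obtain ⟨h1, h2, h3⟩ := heFspec x hPxx
    exact ⟨x, hx, rfl, h1, h2, h3⟩
  have hMF : M ⊆ F := by
    intro m hm
    obtain ⟨x, -, -, h, -⟩ := hMspec m hm
    exact h
  have hMmatch : MMatch hb M := by
    intro m hm m' hm' hne
    obtain ⟨x, hx, hfx, hmF, hA, hB⟩ := hMspec m hm
    obtain ⟨x', hx', hfx', hmF', hA', hB'⟩ := hMspec m' hm'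
    have hxx : x ≠ x' := by
      rintro rfl
      exact hne (hfx ▸ hfx' ▸ rfl)
    constructor
    · rw [hA, hA']
      exact fun h => hxx (Subtype.ext h)
    · intro h
      rw [h] at hB
      exact hxx (hfinj (hB.symm.trans hB'))
  -- cardinality of M
  have hMcard : As.card ≤ M.card + q := by
    have h1 : M.card = Mset.card := by
      rw [hM]
      apply Finset.card_image_of_injOn
      intro x hx x' hx' hxy
      have h2 := (heFspec x (hPxholds x (Finset.mem_filter.1 hx).2)).2.1
      have h3 := (heFspec x' (hPxholds x' (Finset.mem_filter.1 hx').2)).2.1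
      apply Subtype.ext
      rw [← h2, ← h3, hxy]
    have h2 : (Finset.univ.filter (fun x : ι => ¬∃ y : V, f x = Sum.inl y)).card ≤ q := by
      have hinj2 : ∀ x ∈ Finset.univ.filter (fun x : ι => ¬∃ y : V, f x = Sum.inl y),
          ∃ j : Fin q, f x = Sum.inr j := by
        intro x hx
        have hno := (Finset.mem_filter.1 hx).2
        cases hfx : f x with
        | inl y => exact absurd ⟨y, hfx⟩ hno
        | inr j => exact ⟨j, rfl⟩
      calc (Finset.univ.filter (fun x : ι => ¬∃ y : V, f x = Sum.inl y)).card
          = ((Finset.univ.filter (fun x : ι => ¬∃ y : V, f x = Sum.inl y)).image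
              (fun x => f x)).card := by
            rw [Finset.card_image_of_injOn (fun a _ b _ h => hfinj h)]
        _ ≤ (Finset.univ.map ⟨Sum.inr (α := V), Sum.inr_injective⟩ : Finset (V ⊕ Fin q)).card := by
            apply Finset.card_le_card
            intro z hz
            obtain ⟨x, hx, rfl⟩ := Finset.mem_image.1 hz
            obtain ⟨j, hj⟩ := hinj2 x hx
            rw [hj]
            exact Finset.mem_map.2 ⟨j, Finset.mem_univ _, rfl⟩
        _ = q := by rw [Finset.card_map, Finset.card_univ, Fintype.card_fin]
    have h3 : Mset.card + (Finset.univ.filter (fun x : ι => ¬∃ y : V, f x = Sum.inl y)).card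
        = As.card := by
      rw [hMset, Finset.card_filter_add_card_filter_not, Finset.card_univ]
      exact Fintype.card_coe _
    omega
  -- the cover
  set C : Finset V := (As \ Ws) ∪ (Ws.biUnion NB) with hC
  have hCover : ∀ g ∈ F, (eA hb g ∈ C ∧ eA hb g ∈ ends g) ∨ (eB hb g ∈ C ∧ eB hb g ∈ ends g) := by
    intro g hg
    by_cases h : eA hb g ∈ Ws
    · refine Or.inr ⟨?_, eB_mem hb g⟩
      rw [hC]
      apply Finset.mem_union_right
      apply Finset.mem_biUnion.2 ⟨eA hb g, h, ?_⟩
      rw [hNB]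
      exact Finset.mem_image.2 ⟨g, Finset.mem_filter.2 ⟨hg, rfl⟩, rfl⟩
    · refine Or.inl ⟨?_, eA_mem hb g⟩
      rw [hC]
      exact Finset.mem_union_left _ (Finset.mem_sdiff.2 ⟨Finset.mem_image.2 ⟨g, hg, rfl⟩, h⟩)
  have hCcard : C.card ≤ As.card - q := by
    have h1 : (As \ Ws).card = As.card - Ws.card := Finset.card_sdiff_of_subset hWs
    have h2 : Ws.card ≤ As.card := Finset.card_le_card hWs
    calc C.card ≤ (As \ Ws).card + (Ws.biUnion NB).card := Finset.card_union_le _ _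
      _ = As.card - Ws.card + (Ws.biUnion NB).card := by rw [h1]
      _ ≤ As.card - q := by omega
  -- χ
  set χ : E → V := fun m => if eA hb m ∈ C then eA hb m else eB hb m with hχ
  have hχm : ∀ m ∈ M, χ m ∈ C ∧ χ m ∈ ends m := by
    intro m hm
    rw [hχ]
    rcases hCover m (hMF hm) with ⟨h1, h2⟩ | ⟨h1, h2⟩
    · simp only [if_pos h1]; exact ⟨h1, h2⟩
    · by_cases h : eA hb m ∈ C
      · simp only [if_pos h]; exact ⟨h, eA_mem hb m⟩
      · simp only [if_neg h]; exact ⟨h1, h2⟩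
  have hχinj : Set.InjOn χ M := by
    intro m hm m' hm' heq
    by_contra hne
    have h1 := (hχm m hm).2
    have h2 := (hχm m' hm').2
    rw [mem_ends_iff hb] at h1 h2
    have hmm := hMmatch m hm m' hm' hne
    rcases h1 with h1 | h1 <;> rcases h2 with h2 | h2
    · exact hmm.1 (h1 ▸ h2 ▸ heq)
    · exact eA_ne_eB hb m m' (h1 ▸ h2 ▸ heq)
    · exact eA_ne_eB hb m' m (h2 ▸ h1 ▸ heq).symm
    · exact hmm.2 (h1 ▸ h2 ▸ heq)
  have himg : M.image χ = C := by
    apply Finset.eq_of_subset_of_card_le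
    · intro z hz
      obtain ⟨m, hm, rfl⟩ := Finset.mem_image.1 hz
      exact (hχm m hm).1
    · rw [Finset.card_image_of_injOn hχinj]
      omega
  refine ⟨M, χ, hMF, hMmatch, fun m hm => (hχm m hm).2, ?_⟩
  intro g hg
  rcases hCover g hg with ⟨h1, h2⟩ | ⟨h1, h2⟩
  · rw [← himg] at h1
    obtain ⟨m, hm, hmeq⟩ := Finset.mem_image.1 h1
    exact ⟨m, hm, by rw [hmeq]; exact h2⟩
  · rw [← himg] at h1
    obtain ⟨m, hm, hmeq⟩ := Finset.mem_image.1 h1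
    exact ⟨m, hm, by rw [hmeq]; exact h2⟩

end KC

section Peel

variable [Fintype E] {ends : E → Sym2 V} {side : V → Bool} (hb : Bip ends side)

/-- Peeling lemma: a nonempty matching such that (A-version) every F-edge whose A-end is
covered also has its B-end covered, or the mirrored B-version. -/
theorem peel (F : Finset E) (hF : F.Nonempty) :
    ∃ M ⊆ F, M.Nonempty ∧ MMatch hb M ∧
      ((∀ f ∈ F, (∃ m ∈ M, eA hb m = eA hb f) → (∃ m ∈ M, eB hb m = eB hb f)) ∨
       (∀ f ∈ F, (∃ m ∈ M, eB hb m = eB hb f) → (∃ m ∈ M, eA hb m = eA hb f))) := by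
  classical
  obtain ⟨M0, χ, hM0F, hM0match, hχends, hχhit⟩ := kc hb F
  have hM0ne : M0.Nonempty := by
    obtain ⟨f0, hf0⟩ := hF
    obtain ⟨m, hm, -⟩ := hχhit f0 hf0
    exact ⟨m, hm⟩
  have hχAB : ∀ m ∈ M0, (side (χ m) = true ∧ χ m = eA hb m) ∨
      (side (χ m) = false ∧ χ m = eB hb m) := by
    intro m hm
    have := hχends m hm
    rw [mem_ends_iff hb] at this
    rcases this with h | h
    · exact Or.inl ⟨by rw [h]; exact sideA hb m, h⟩
    · exact Or.inr ⟨by rw [h]; exact sideB hb m, h⟩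
  set MB : Finset E := M0.filter (fun m => side (χ m) = false) with hMB
  rcases Finset.eq_empty_or_nonempty MB with hMBe | hMBne
  · -- B-version with M0 : every F-edge has its A-end covered
    refine ⟨M0, hM0F, hM0ne, hM0match, Or.inr ?_⟩
    intro f hf _hcov
    obtain ⟨m, hm, hmf⟩ := hχhit f hf
    rw [mem_ends_iff hb] at hmf
    rcases hmf with h | h
    · rcases hχAB m hm with ⟨-, hA⟩ | ⟨hs, -⟩
      · exact ⟨m, hm, by rw [← hA, h]⟩
      · exfalso
        rw [h, sideA hb f] at hs
        simp at hs
    · have : m ∈ MB := Finset.mem_filter.2 ⟨hm, by rw [h]; exact sideB hb f⟩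
      rw [hMBe] at this
      exact absurd this (Finset.notMem_empty m)
  · -- A-version with MB
    refine ⟨MB, le_trans (Finset.filter_subset _ _) hM0F, hMBne, ?_, Or.inl ?_⟩
    · intro m hm m' hm' hne
      exact hM0match m (Finset.mem_filter.1 hm).1 m' (Finset.mem_filter.1 hm').1 hne
    · rintro f hf ⟨m, hm, hmA⟩
      obtain ⟨m', hm', hm'f⟩ := hχhit f hf
      rw [mem_ends_iff hb] at hm'f
      rcases hm'f with h | h
      · -- χ m' = eA f : impossible
        exfalso
        rcases hχAB m' hm' with ⟨-, hA⟩ | ⟨hs, -⟩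
        · -- eA m' = eA f = eA m with m ∈ MB
          have hAA : eA hb m' = eA hb m := by rw [← hA, h, ← hmA]
          by_cases hmm : m' = (m : E)
          · subst hmm
            have hsf := (Finset.mem_filter.1 hm).2
            rw [h] at hsf
            rw [sideA hb f] at hsf
            simp at hsf
          · exact (hM0match m' hm' m (Finset.mem_filter.1 hm).1 hmm).1 hAA
        · rw [h, sideA hb f] at hs
          simp at hs
      · rcases hχAB m' hm' with ⟨hs, -⟩ | ⟨hs, hB⟩
        · rw [h, sideB hb f] at hs
          simp at hs
        · refine ⟨m', Finset.mem_filter.2 ⟨hm', hs⟩, by rw [← hB, h]⟩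

end Peel

section Ord

variable [Fintype E] {ends : E → Sym2 V} {side : V → Bool} (hb : Bip ends side)

omit [Fintype E] in
theorem dg_mono {F' F : Finset E} (h : F' ⊆ F) (w : V) :
    dg (ends := ends) F' w ≤ dg (ends := ends) F w :=
  Finset.card_le_card (Finset.filter_subset_filter _ h)

omit [Fintype E] in
theorem dg_covered {F M : Finset E} (hMF : M ⊆ F) {m : E} (hm : m ∈ M) {w : V}
    (hw : w ∈ ends m) :
    dg (ends := ends) (F \ M) w + 1 ≤ dg (ends := ends) F w := by
  classical
  have hmem : m ∈ estar (ends := ends) F w := Finset.mem_filter.2 ⟨hMF hm, hw⟩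
  have hnot : m ∉ estar (ends := ends) (F \ M) w := by
    intro h; exact (Finset.mem_sdiff.1 (Finset.mem_filter.1 h).1).2 hm
  have hsub : insert m (estar (ends := ends) (F \ M) w) ⊆ estar (ends := ends) F w := by
    intro x hx
    rcases Finset.mem_insert.1 hx with rfl | hx
    · exact hmem
    · exact Finset.mem_filter.2 ⟨(Finset.mem_sdiff.1 (Finset.mem_filter.1 hx).1).1,
        (Finset.mem_filter.1 hx).2⟩
  calc dg (ends := ends) (F \ M) w + 1
      = (insert m (estar (ends := ends) (F \ M) w)).card :=
        (Finset.card_insert_of_notMem hnot).symm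
    _ ≤ _ := Finset.card_le_card hsub

theorem ord : ∀ F : Finset E, ∃ σ : V → E → ℤ, StarInj (ends := ends) F σ ∧
    ∀ e ∈ F, cntA hb F σ e + cntB hb F σ e + 1 ≤
      max (dg (ends := ends) F (eA hb e)) (dg (ends := ends) F (eB hb e)) := by
  classical
  intro F
  induction F using Finset.strongInduction with
  | _ F IH =>
  rcases Finset.eq_empty_or_nonempty F with rfl | hFne
  · exact ⟨fun _ _ => 0, fun w e he => absurd he (Finset.notMem_empty e),
      fun e he => absurd he (Finset.notMem_empty e)⟩
  obtain ⟨M, hMF, hMne, hMmatch, hR⟩ := peel hb F hFne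
  set F' : Finset E := F \ M with hF'def
  have hF'ssub : F' ⊂ F := by
    obtain ⟨m0, hm0⟩ := hMne
    refine Finset.ssubset_iff_of_subset Finset.sdiff_subset |>.2 ⟨m0, hMF hm0, ?_⟩
    intro h
    exact (Finset.mem_sdiff.1 h).2 hm0
  obtain ⟨σ', hinj', hbnd'⟩ := IH F' hF'ssub
  have hMuniq : ∀ w : V, ∀ m ∈ M, ∀ m' ∈ M, w ∈ ends m → w ∈ ends m' → m = m' := by
    intro w m hm m' hm' h1 h2
    by_contra hne
    have hp := hMmatch m hm m' hm' hne
    rw [mem_ends_iff hb] at h1 h2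
    rcases h1 with h1 | h1 <;> rcases h2 with h2 | h2
    · exact hp.1 (h1 ▸ h2 ▸ rfl)
    · exact eA_ne_eB hb m m' (h1 ▸ h2 ▸ rfl)
    · exact eA_ne_eB hb m' m (h2 ▸ h1 ▸ rfl)
    · exact hp.2 (h1 ▸ h2 ▸ rfl)
  rcases hR with hRA | hRB
  · -- A-version : M-edges go on top at both endpoints
    set hi : V → ℤ := fun w =>
      (((estar (ends := ends) F' w).sup fun f => (σ' w f).toNat : ℕ) : ℤ) + 1 with hhidef
    set σ : V → E → ℤ := fun w e => if e ∈ M then hi w else σ' w e with hσdef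
    have hσM : ∀ w : V, ∀ m ∈ M, σ w m = hi w := by
      intro w m hm
      show (if m ∈ M then hi w else σ' w m) = hi w
      exact if_pos hm
    have hσF' : ∀ w : V, ∀ f ∈ F', σ w f = σ' w f := by
      intro w f hf
      show (if f ∈ M then hi w else σ' w f) = σ' w f
      exact if_neg (Finset.mem_sdiff.1 hf).2
    have hhi : ∀ w : V, ∀ f ∈ F', w ∈ ends f → σ' w f < hi w := by
      intro w f hf hw
      have h1 : σ' w f ≤ ((σ' w f).toNat : ℤ) := Int.self_le_toNat _
      have hmem : f ∈ estar (ends := ends) F' w := Finset.mem_filter.2 ⟨hf, hw⟩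
      have h2 : ((σ' w f).toNat : ℤ) ≤
          (((estar (ends := ends) F' w).sup fun f => (σ' w f).toNat : ℕ) : ℤ) :=
        Nat.cast_le.2 (Finset.le_sup (f := fun f => (σ' w f).toNat) hmem)
      show σ' w f < _ + 1
      omega
    have hinj : StarInj (ends := ends) F σ := by
      intro w e heF f hfF hwe hwf heq
      by_cases heM : e ∈ M <;> by_cases hfM : f ∈ M
      · exact hMuniq w e heM f hfM hwe hwf
      · exfalso
        rw [hσM w e heM, hσF' w f (Finset.mem_sdiff.2 ⟨hfF, hfM⟩)] at heq
        exact absurd heq.symm (ne_of_lt (hhi w f (Finset.mem_sdiff.2 ⟨hfF, hfM⟩) hwf))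
      · exfalso
        rw [hσM w f hfM, hσF' w e (Finset.mem_sdiff.2 ⟨heF, heM⟩)] at heq
        exact absurd heq (ne_of_lt (hhi w e (Finset.mem_sdiff.2 ⟨heF, heM⟩) hwe))
      · exact hinj' w e (Finset.mem_sdiff.2 ⟨heF, heM⟩) f (Finset.mem_sdiff.2 ⟨hfF, hfM⟩)
          hwe hwf (by rw [← hσF' w e (Finset.mem_sdiff.2 ⟨heF, heM⟩),
            ← hσF' w f (Finset.mem_sdiff.2 ⟨hfF, hfM⟩)]; exact heq)
    refine ⟨σ, hinj, ?_⟩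
    intro e heF
    by_cases heM : e ∈ M
    · -- M-edge: cntA = 0, cntB ≤ deg_B - 1
      have hcA : cntA hb F σ e = 0 := by
        show (F.filter _).card = 0
        rw [Finset.card_eq_zero, Finset.filter_eq_empty_iff]
        rintro f hfF ⟨hAf, hlt⟩
        rw [hσM _ e heM] at hlt
        by_cases hfM : f ∈ M
        · rw [hσM _ f hfM] at hlt
          exact lt_irrefl _ hlt
        · have hfF' : f ∈ F' := Finset.mem_sdiff.2 ⟨hfF, hfM⟩
          rw [hσF' _ f hfF'] at hlt
          exact absurd hlt (not_lt.2 (le_of_lt (hhi _ f hfF' (by rw [← hAf]; exact eA_mem hb f))))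
      have hcB : cntB hb F σ e + 1 ≤ dg (ends := ends) F (eB hb e) := by
        set Bf := F.filter
            (fun f => eB hb f = eB hb e ∧ σ (eB hb e) f < σ (eB hb e) e) with hBfdef
        have hnot : e ∉ Bf := by
          intro h
          exact lt_irrefl _ (Finset.mem_filter.1 h).2.2
        have hsub : insert e Bf ⊆ estar (ends := ends) F (eB hb e) := by
          intro x hx
          rcases Finset.mem_insert.1 hx with heq | hx
          · rw [heq]; exact Finset.mem_filter.2 ⟨heF, eB_mem hb e⟩
          · obtain ⟨hxF, hBx, -⟩ := Finset.mem_filter.1 hx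
            exact Finset.mem_filter.2 ⟨hxF, by rw [← hBx]; exact eB_mem hb x⟩
        calc cntB hb F σ e + 1 = (insert e Bf).card :=
              (Finset.card_insert_of_notMem hnot).symm
          _ ≤ _ := Finset.card_le_card hsub
      have hmax := le_max_right (dg (ends := ends) F (eA hb e)) (dg (ends := ends) F (eB hb e))
      omega
    · -- e ∈ F'
      have heF' : e ∈ F' := Finset.mem_sdiff.2 ⟨heF, heM⟩
      have hB : cntB hb F σ e ≤ cntB hb F' σ' e := by
        apply Finset.card_le_card
        intro f hf
        obtain ⟨hfF, hBf, hlt⟩ := Finset.mem_filter.1 hf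
        have hfM : f ∉ M := by
          intro hfM
          rw [hσM _ f hfM, hσF' _ e heF'] at hlt
          exact absurd (lt_trans hlt (hhi _ e heF' (eB_mem hb e))) (lt_irrefl _)
        have hfF' : f ∈ F' := Finset.mem_sdiff.2 ⟨hfF, hfM⟩
        refine Finset.mem_filter.2 ⟨hfF', hBf, ?_⟩
        rw [← hσF' _ f hfF', ← hσF' _ e heF']
        exact hlt
      have hA : cntA hb F σ e ≤ cntA hb F' σ' e +
          (M.filter (fun m => eA hb m = eA hb e)).card := by
        have hsub : F.filter (fun f => eA hb f = eA hb e ∧ σ (eA hb e) e < σ (eA hb e) f) ⊆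
            (F'.filter (fun f => eA hb f = eA hb e ∧ σ' (eA hb e) e < σ' (eA hb e) f)) ∪
            (M.filter (fun m => eA hb m = eA hb e)) := by
          intro f hf
          obtain ⟨hfF, hAf, hlt⟩ := Finset.mem_filter.1 hf
          by_cases hfM : f ∈ M
          · exact Finset.mem_union_right _ (Finset.mem_filter.2 ⟨hfM, hAf⟩)
          · have hfF' : f ∈ F' := Finset.mem_sdiff.2 ⟨hfF, hfM⟩
            apply Finset.mem_union_left
            refine Finset.mem_filter.2 ⟨hfF', hAf, ?_⟩
            rw [← hσF' _ f hfF', ← hσF' _ e heF']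
            exact hlt
        calc cntA hb F σ e ≤ _ := Finset.card_le_card hsub
          _ ≤ _ := Finset.card_union_le _ _
      have hbnde := hbnd' e heF'
      by_cases hcovA : ∃ m ∈ M, eA hb m = eA hb e
      · have hcovB : ∃ m ∈ M, eB hb m = eB hb e := hRA e heF hcovA
        obtain ⟨mA, hmA, hmAe⟩ := hcovA
        obtain ⟨mB, hmB, hmBe⟩ := hcovB
        have hMcnt : (M.filter (fun m => eA hb m = eA hb e)).card ≤ 1 := by
          apply Finset.card_le_one.2
          intro a ha b hbb
          obtain ⟨haM, haA⟩ := Finset.mem_filter.1 ha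
          obtain ⟨hbM, hbA⟩ := Finset.mem_filter.1 hbb
          exact hMuniq (eA hb e) a haM b hbM (by rw [← haA]; exact eA_mem hb a)
            (by rw [← hbA]; exact eA_mem hb b)
        have hdgA : dg (ends := ends) F' (eA hb e) + 1 ≤ dg (ends := ends) F (eA hb e) :=
          dg_covered hMF hmA (by rw [← hmAe]; exact eA_mem hb mA)
        have hdgB : dg (ends := ends) F' (eB hb e) + 1 ≤ dg (ends := ends) F (eB hb e) :=
          dg_covered hMF hmB (by rw [← hmBe]; exact eB_mem hb mB)
        have hkey : max (dg (ends := ends) F' (eA hb e)) (dg (ends := ends) F' (eB hb e)) + 1 ≤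
            max (dg (ends := ends) F (eA hb e)) (dg (ends := ends) F (eB hb e)) := by
          omega
        omega
      · have hMcnt0 : (M.filter (fun m => eA hb m = eA hb e)).card = 0 := by
          rw [Finset.card_eq_zero, Finset.filter_eq_empty_iff]
          intro m hm hAe
          exact hcovA ⟨m, hm, hAe⟩
        have hkey : max (dg (ends := ends) F' (eA hb e)) (dg (ends := ends) F' (eB hb e)) ≤
            max (dg (ends := ends) F (eA hb e)) (dg (ends := ends) F (eB hb e)) :=
          max_le_max (dg_mono Finset.sdiff_subset _) (dg_mono Finset.sdiff_subset _)
        omega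
  · -- B-version : M-edges go to the bottom at both endpoints
    set lo : V → ℤ := fun w =>
      -((((estar (ends := ends) F' w).sup fun f => (-(σ' w f)).toNat : ℕ) : ℤ) + 1) with hlodef
    set σ : V → E → ℤ := fun w e => if e ∈ M then lo w else σ' w e with hσdef
    have hσM : ∀ w : V, ∀ m ∈ M, σ w m = lo w := by
      intro w m hm
      show (if m ∈ M then lo w else σ' w m) = lo w
      exact if_pos hm
    have hσF' : ∀ w : V, ∀ f ∈ F', σ w f = σ' w f := by
      intro w f hf
      show (if f ∈ M then lo w else σ' w f) = σ' w f
      exact if_neg (Finset.mem_sdiff.1 hf).2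
    have hlo : ∀ w : V, ∀ f ∈ F', w ∈ ends f → lo w < σ' w f := by
      intro w f hf hw
      have h1 : -(σ' w f) ≤ (((-(σ' w f)).toNat : ℕ) : ℤ) := Int.self_le_toNat _
      have hmem : f ∈ estar (ends := ends) F' w := Finset.mem_filter.2 ⟨hf, hw⟩
      have h2 : (((-(σ' w f)).toNat : ℕ) : ℤ) ≤
          (((estar (ends := ends) F' w).sup fun f => (-(σ' w f)).toNat : ℕ) : ℤ) :=
        Nat.cast_le.2 (Finset.le_sup (f := fun f => (-(σ' w f)).toNat) hmem)
      show -(_ + 1) < σ' w f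
      omega
    have hinj : StarInj (ends := ends) F σ := by
      intro w e heF f hfF hwe hwf heq
      by_cases heM : e ∈ M <;> by_cases hfM : f ∈ M
      · exact hMuniq w e heM f hfM hwe hwf
      · exfalso
        rw [hσM w e heM, hσF' w f (Finset.mem_sdiff.2 ⟨hfF, hfM⟩)] at heq
        exact absurd heq (ne_of_lt (hlo w f (Finset.mem_sdiff.2 ⟨hfF, hfM⟩) hwf))
      · exfalso
        rw [hσM w f hfM, hσF' w e (Finset.mem_sdiff.2 ⟨heF, heM⟩)] at heq
        exact absurd heq.symm (ne_of_lt (hlo w e (Finset.mem_sdiff.2 ⟨heF, heM⟩) hwe))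
      · exact hinj' w e (Finset.mem_sdiff.2 ⟨heF, heM⟩) f (Finset.mem_sdiff.2 ⟨hfF, hfM⟩)
          hwe hwf (by rw [← hσF' w e (Finset.mem_sdiff.2 ⟨heF, heM⟩),
            ← hσF' w f (Finset.mem_sdiff.2 ⟨hfF, hfM⟩)]; exact heq)
    refine ⟨σ, hinj, ?_⟩
    intro e heF
    by_cases heM : e ∈ M
    · -- M-edge: cntB = 0, cntA ≤ deg_A - 1
      have hcB : cntB hb F σ e = 0 := by
        show (F.filter _).card = 0
        rw [Finset.card_eq_zero, Finset.filter_eq_empty_iff]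
        rintro f hfF ⟨hBf, hlt⟩
        rw [hσM _ e heM] at hlt
        by_cases hfM : f ∈ M
        · rw [hσM _ f hfM] at hlt
          exact lt_irrefl _ hlt
        · have hfF' : f ∈ F' := Finset.mem_sdiff.2 ⟨hfF, hfM⟩
          rw [hσF' _ f hfF'] at hlt
          exact absurd hlt (not_lt.2 (le_of_lt (hlo _ f hfF' (by rw [← hBf]; exact eB_mem hb f))))
      have hcA : cntA hb F σ e + 1 ≤ dg (ends := ends) F (eA hb e) := by
        set Af := F.filter
            (fun f => eA hb f = eA hb e ∧ σ (eA hb e) e < σ (eA hb e) f) with hAfdef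
        have hnot : e ∉ Af := by
          intro h
          exact lt_irrefl _ (Finset.mem_filter.1 h).2.2
        have hsub : insert e Af ⊆ estar (ends := ends) F (eA hb e) := by
          intro x hx
          rcases Finset.mem_insert.1 hx with heq | hx
          · rw [heq]; exact Finset.mem_filter.2 ⟨heF, eA_mem hb e⟩
          · obtain ⟨hxF, hAx, -⟩ := Finset.mem_filter.1 hx
            exact Finset.mem_filter.2 ⟨hxF, by rw [← hAx]; exact eA_mem hb x⟩
        calc cntA hb F σ e + 1 = (insert e Af).card :=
              (Finset.card_insert_of_notMem hnot).symm
          _ ≤ _ := Finset.card_le_card hsub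
      have hmax := le_max_left (dg (ends := ends) F (eA hb e)) (dg (ends := ends) F (eB hb e))
      omega
    · -- e ∈ F'
      have heF' : e ∈ F' := Finset.mem_sdiff.2 ⟨heF, heM⟩
      have hA : cntA hb F σ e ≤ cntA hb F' σ' e := by
        apply Finset.card_le_card
        intro f hf
        obtain ⟨hfF, hAf, hlt⟩ := Finset.mem_filter.1 hf
        have hfM : f ∉ M := by
          intro hfM
          rw [hσM _ f hfM, hσF' _ e heF'] at hlt
          exact absurd (lt_trans hlt (hlo _ e heF' (eA_mem hb e))) (lt_irrefl _)
        have hfF' : f ∈ F' := Finset.mem_sdiff.2 ⟨hfF, hfM⟩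
        refine Finset.mem_filter.2 ⟨hfF', hAf, ?_⟩
        rw [← hσF' _ f hfF', ← hσF' _ e heF']
        exact hlt
      have hB : cntB hb F σ e ≤ cntB hb F' σ' e +
          (M.filter (fun m => eB hb m = eB hb e)).card := by
        have hsub : F.filter (fun f => eB hb f = eB hb e ∧ σ (eB hb e) f < σ (eB hb e) e) ⊆
            (F'.filter (fun f => eB hb f = eB hb e ∧ σ' (eB hb e) f < σ' (eB hb e) e)) ∪
            (M.filter (fun m => eB hb m = eB hb e)) := by
          intro f hf
          obtain ⟨hfF, hBf, hlt⟩ := Finset.mem_filter.1 hf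
          by_cases hfM : f ∈ M
          · exact Finset.mem_union_right _ (Finset.mem_filter.2 ⟨hfM, hBf⟩)
          · have hfF' : f ∈ F' := Finset.mem_sdiff.2 ⟨hfF, hfM⟩
            apply Finset.mem_union_left
            refine Finset.mem_filter.2 ⟨hfF', hBf, ?_⟩
            rw [← hσF' _ f hfF', ← hσF' _ e heF']
            exact hlt
        calc cntB hb F σ e ≤ _ := Finset.card_le_card hsub
          _ ≤ _ := Finset.card_union_le _ _
      have hbnde := hbnd' e heF'
      by_cases hcovB : ∃ m ∈ M, eB hb m = eB hb e
      · have hcovA : ∃ m ∈ M, eA hb m = eA hb e := hRB e heF hcovB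
        obtain ⟨mA, hmA, hmAe⟩ := hcovA
        obtain ⟨mB, hmB, hmBe⟩ := hcovB
        have hMcnt : (M.filter (fun m => eB hb m = eB hb e)).card ≤ 1 := by
          apply Finset.card_le_one.2
          intro a ha b hbb
          obtain ⟨haM, haB⟩ := Finset.mem_filter.1 ha
          obtain ⟨hbM, hbB⟩ := Finset.mem_filter.1 hbb
          exact hMuniq (eB hb e) a haM b hbM (by rw [← haB]; exact eB_mem hb a)
            (by rw [← hbB]; exact eB_mem hb b)
        have hdgA : dg (ends := ends) F' (eA hb e) + 1 ≤ dg (ends := ends) F (eA hb e) :=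
          dg_covered hMF hmA (by rw [← hmAe]; exact eA_mem hb mA)
        have hdgB : dg (ends := ends) F' (eB hb e) + 1 ≤ dg (ends := ends) F (eB hb e) :=
          dg_covered hMF hmB (by rw [← hmBe]; exact eB_mem hb mB)
        have hkey : max (dg (ends := ends) F' (eA hb e)) (dg (ends := ends) F' (eB hb e)) + 1 ≤
            max (dg (ends := ends) F (eA hb e)) (dg (ends := ends) F (eB hb e)) := by
          omega
        omega
      · have hMcnt0 : (M.filter (fun m => eB hb m = eB hb e)).card = 0 := by
          rw [Finset.card_eq_zero, Finset.filter_eq_empty_iff]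
          intro m hm hBe
          exact hcovB ⟨m, hm, hBe⟩
        have hkey : max (dg (ends := ends) F' (eA hb e)) (dg (ends := ends) F' (eB hb e)) ≤
            max (dg (ends := ends) F (eA hb e)) (dg (ends := ends) F (eB hb e)) :=
          max_le_max (dg_mono Finset.sdiff_subset _) (dg_mono Finset.sdiff_subset _)
        omega

end Ord


theorem madj_symm {ends : E → Sym2 V} {e f : E} (h : MAdj ends e f) : MAdj ends f e :=
  ⟨fun hh => h.1 hh.symm, h.2.imp (fun _ hv => ⟨hv.2, hv.1⟩)⟩


/-- Theorem 8 (bipartite multigraphs, precoloured degree at most `k`, palette `Δ + k`). -/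
theorem bipartite_extend_predegree [Fintype E] (ends : E → Sym2 V)
    (hloop : ∀ e, ¬ (ends e).IsDiag)
    (side : V → Bool)
    (hbip : ∀ (e : E) (u v : V), ends e = s(u, v) → side u ≠ side v)
    (Δ k : ℕ) (hk : 1 ≤ k)
    (hΔ : IsGreatest (Set.range (mdeg ends)) Δ)
    (S : Set E) (pre : E → ℕ)
    (hpal : ∀ e ∈ S, pre e ∈ Finset.Icc 1 (Δ + k))
    (hproper : ∀ e ∈ S, ∀ f ∈ S, MAdj ends e f → pre e ≠ pre f)
    (hpredeg : ∀ v : V, {e ∈ S | v ∈ ends e}.ncard ≤ k) :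
    ∃ c : E → ℕ, MProper ends c ∧ (∀ e, c e ∈ Finset.Icc 1 (Δ + k)) ∧
      ∀ e ∈ S, c e = pre e := by

  classical
  have hb : Bip ends side := ⟨hloop, hbip⟩
  set SF : Finset E := (Set.toFinite S).toFinset with hSFdef
  have hSF : ∀ e, e ∈ SF ↔ e ∈ S := fun e => Set.Finite.mem_toFinset _
  set F : Finset E := Finset.univ.filter (fun e => e ∉ S) with hFdef
  have hF : ∀ e, e ∈ F ↔ e ∉ S := by
    intro e
    rw [hFdef, Finset.mem_filter]
    simp
  -- degrees
  have hmdeg : ∀ w, mdeg ends w = dg (ends := ends) Finset.univ w := by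
    intro w
    rw [mdeg, dg]
    rw [show {e : E | w ∈ ends e} = ↑(estar (ends := ends) Finset.univ w) by
      ext e; simp [estar]]
    exact Set.ncard_coe_finset _
  have hΔub : ∀ w, dg (ends := ends) Finset.univ w ≤ Δ := by
    intro w
    rw [← hmdeg]
    exact hΔ.2 ⟨w, rfl⟩
  have hsdeg : ∀ w, dg (ends := ends) SF w ≤ k := by
    intro w
    have : {e ∈ S | w ∈ ends e}.ncard = dg (ends := ends) SF w := by
      rw [dg, show {e ∈ S | w ∈ ends e} = ↑(estar (ends := ends) SF w) by
        ext e; simp [estar, hSF]]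
      exact Set.ncard_coe_finset _
    rw [← this]
    exact hpredeg w
  have hsplit : ∀ w, dg (ends := ends) F w + dg (ends := ends) SF w =
      dg (ends := ends) Finset.univ w := by
    intro w
    have h1 : estar (ends := ends) F w =
        (estar (ends := ends) Finset.univ w).filter (fun e => e ∉ S) := by
      ext e
      simp [estar, hF, and_comm]
    have h2 : estar (ends := ends) SF w =
        (estar (ends := ends) Finset.univ w).filter (fun e => e ∈ S) := by
      ext e
      simp [estar, hSF, and_comm]
    rw [dg, dg, dg, h1, h2]
    rw [add_comm]
    exact Finset.card_filter_add_card_filter_not _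
  -- lists
  set L : E → Finset ℕ := fun e => (Finset.Icc 1 (Δ + k)).filter
    (fun col => ∀ f ∈ SF, MAdj ends e f → pre f ≠ col) with hLdef
  have hLsub : ∀ e, L e ⊆ Finset.Icc 1 (Δ + k) := fun e => Finset.filter_subset _ _
  have hLcard : ∀ e, Δ + k ≤ (L e).card +
      (dg (ends := ends) SF (eA hb e) + dg (ends := ends) SF (eB hb e)) := by
    intro e
    have hIccCard : (Finset.Icc 1 (Δ + k)).card = Δ + k := by
      rw [Nat.card_Icc]; omega
    have hsub : Finset.Icc 1 (Δ + k) \ L e ⊆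
        (SF.filter (fun f => MAdj ends e f)).image pre := by
      intro col hcol
      obtain ⟨hIcc, hnot⟩ := Finset.mem_sdiff.1 hcol
      have : ¬ ∀ f ∈ SF, MAdj ends e f → pre f ≠ col := by
        intro h
        exact hnot (Finset.mem_filter.2 ⟨hIcc, h⟩)
      push_neg at this
      obtain ⟨f, hfSF, hadj, hpre⟩ := this
      exact Finset.mem_image.2 ⟨f, Finset.mem_filter.2 ⟨hfSF, hadj⟩, hpre⟩
    have hadjsub : SF.filter (fun f => MAdj ends e f) ⊆
        estar (ends := ends) SF (eA hb e) ∪ estar (ends := ends) SF (eB hb e) := by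
      intro f hf
      obtain ⟨hfSF, hadj⟩ := Finset.mem_filter.1 hf
      obtain ⟨-, v, hv1, hv2⟩ := hadj
      rw [mem_ends_iff hb] at hv1
      rcases hv1 with rfl | rfl
      · exact Finset.mem_union_left _ (Finset.mem_filter.2 ⟨hfSF, hv2⟩)
      · exact Finset.mem_union_right _ (Finset.mem_filter.2 ⟨hfSF, hv2⟩)
    have h1 : (Finset.Icc 1 (Δ + k) \ L e).card ≤
        dg (ends := ends) SF (eA hb e) + dg (ends := ends) SF (eB hb e) := by
      calc (Finset.Icc 1 (Δ + k) \ L e).card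
          ≤ ((SF.filter (fun f => MAdj ends e f)).image pre).card := Finset.card_le_card hsub
        _ ≤ (SF.filter (fun f => MAdj ends e f)).card := Finset.card_image_le
        _ ≤ _ := le_trans (Finset.card_le_card hadjsub) (Finset.card_union_le _ _)
    have h2 : (Finset.Icc 1 (Δ + k) \ L e).card + (L e).card =
        (Finset.Icc 1 (Δ + k)).card := Finset.card_sdiff_add_card_eq_card (hLsub e)
    omega
  -- orientation
  obtain ⟨σ, hinj, hbnd⟩ := ord hb F
  have hL : ∀ e ∈ F, outdeg hb F σ e < (L e).card := by
    intro e heF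
    have h1 := outdeg_le hb F σ e
    have h2 := hbnd e heF
    have h3 := hLcard e
    have h4 := hsplit (eA hb e)
    have h5 := hsplit (eB hb e)
    have h6 := hΔub (eA hb e)
    have h7 := hΔub (eB hb e)
    have h8 := hsdeg (eA hb e)
    have h9 := hsdeg (eB hb e)
    omega
  obtain ⟨c', hc'mem, hc'prop⟩ := listcol hb σ (∑ e ∈ F, (L e).card) F L le_rfl hinj hL
  refine ⟨fun e => if e ∈ S then pre e else c' e, ?_, ?_, ?_⟩
  · intro e f hadj
    show (if e ∈ S then pre e else c' e) ≠ (if f ∈ S then pre f else c' f)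
    by_cases he : e ∈ S <;> by_cases hf : f ∈ S
    · rw [if_pos he, if_pos hf]
      exact hproper e he f hf hadj
    · -- e ∈ S, f ∉ S
      rw [if_pos he, if_neg hf]
      have hfF : f ∈ F := (hF f).2 hf
      have hmem := hc'mem f hfF
      rw [hLdef] at hmem
      have hcond := (Finset.mem_filter.1 hmem).2
      exact hcond e ((hSF e).2 he) (madj_symm hadj)
    · -- e ∉ S, f ∈ S
      rw [if_neg he, if_pos hf]
      have heF : e ∈ F := (hF e).2 he
      have hmem := hc'mem e heF
      rw [hLdef] at hmem
      have hcond := (Finset.mem_filter.1 hmem).2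
      exact fun h => hcond f ((hSF f).2 hf) hadj h.symm
    · rw [if_neg he, if_neg hf]
      exact hc'prop e ((hF e).2 he) f ((hF f).2 hf) hadj
  · intro e
    show (if e ∈ S then pre e else c' e) ∈ Finset.Icc 1 (Δ + k)
    by_cases he : e ∈ S
    · rw [if_pos he]
      exact hpal e he
    · rw [if_neg he]
      exact hLsub e (hc'mem e ((hF e).2 he))
  · intro e he
    show (if e ∈ S then pre e else c' e) = pre e
    rw [if_pos he]
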